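/- Let F be a field, I and J (possibly infinite) index sets, and a : I × J → F a function such that for each fixed i ∈ I there are only finitely many j ∈ J with a(i,j) ≠ 0. Suppose that whenever x : J → F satisfies ∑_{j ∈ J} a(i,j)·x(j) = 0 for every i ∈ I (each sum being finite), then x is identically zero. Then there exists an injection φ : J → I such that a(φ(j), j) ≠ 0 for every j ∈ J. -/

import Mathlib

namespace Stmt2Aux

open Finsupp Submodule Set Function

variable {F : Type*} [Field F] {I J : Type*}




variable {F : Type*} [Field F] {I J : Type*}

/-- restriction of a finitely supported function to a set of coordinates -/
noncomputable def proj (C : Set J) : (J →₀ F) →ₗ[F] (J →₀ F) :=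
  letI := Classical.decPred (fun j => j ∈ C)
  { toFun := fun v => v.filter (· ∈ C)
    map_add' := fun _ _ => Finsupp.filter_add
    map_smul' := fun _ _ => Finsupp.filter_smul }

lemma proj_apply_mem {C : Set J} {j : J} (hj : j ∈ C) (v : J →₀ F) :
    proj C v j = v j := by
  classical
  simp only [proj, LinearMap.coe_mk, AddHom.coe_mk, Finsupp.filter_apply]
  exact if_pos hj

lemma proj_apply_not_mem {C : Set J} {j : J} (hj : j ∉ C) (v : J →₀ F) :
    proj C v j = 0 := by
  classical
  simp only [proj, LinearMap.coe_mk, AddHom.coe_mk, Finsupp.filter_apply]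
  exact if_neg hj

lemma proj_proj {C C' : Set J} (h : C' ⊆ C) (v : J →₀ F) :
    proj C' (proj C v) = proj C' v := by
  ext j
  by_cases hj : j ∈ C'
  · rw [proj_apply_mem hj, proj_apply_mem hj, proj_apply_mem (h hj)]
  · rw [proj_apply_not_mem hj, proj_apply_not_mem hj]

lemma proj_single_mem {C : Set J} {j : J} (hj : j ∈ C) :
    proj C (Finsupp.single j (1 : F)) = Finsupp.single j 1 := by
  classical
  ext j'
  by_cases hj' : j' ∈ C
  · rw [proj_apply_mem hj']
  · rw [proj_apply_not_mem hj']
    rw [Finsupp.single_apply, if_neg]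
    rintro rfl; exact hj' hj

lemma proj_single_not_mem {C : Set J} {j : J} (hj : j ∉ C) :
    proj C (Finsupp.single j (1 : F)) = 0 := by
  classical
  ext j'
  by_cases hj' : j' ∈ C
  · rw [proj_apply_mem hj']
    simp only [Finsupp.coe_zero, Pi.zero_apply]
    rw [Finsupp.single_apply, if_neg]
    rintro rfl; exact hj hj'
  · rw [proj_apply_not_mem hj']; rfl

lemma proj_eq_zero {C : Set J} {v : J →₀ F} (h : ∀ j ∈ C, v j = 0) :
    proj C v = 0 := by
  ext j
  by_cases hj : j ∈ C
  · rw [proj_apply_mem hj]; exact h j hj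
  · rw [proj_apply_not_mem hj]; rfl

/-- the rows indexed by `R`, restricted to coordinates `C`, span all coordinate
vectors of coordinates in `C`. -/
def SpansOn (r : I → (J →₀ F)) (R : Set I) (C : Set J) : Prop :=
  ∀ j ∈ C, Finsupp.single j (1 : F) ∈ span F ((fun i => proj C (r i)) '' R)

/-- Key exchange step: we can match a column `j` to a row `i` with nonzero entry so that
spanning survives deleting row `i` and column `j`. -/
lemma key {r : I → (J →₀ F)} {R : Set I} {C : Set J} (h : SpansOn r R C) {j : J} (hj : j ∈ C) :
    ∃ i ∈ R, r i j ≠ 0 ∧ SpansOn r (R \ {i}) (C \ {j}) := by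
  classical
  obtain ⟨l, hl, hsum⟩ := (Finsupp.mem_span_image_iff_linearCombination F).1 (h j hj)
  rw [Finsupp.linearCombination_apply] at hsum
  have hlR : (l.support : Set I) ⊆ R := Finsupp.mem_supported F l |>.1 hl
  -- evaluate at j
  have heval : (l.sum fun i μ => μ * (r i j)) = 1 := by
    have := congrArg (fun v : J →₀ F => v j) hsum
    simp only [Finsupp.sum_apply, Finsupp.smul_apply, smul_eq_mul] at this
    rw [Finsupp.single_eq_same] at this
    rw [← this]
    apply Finsupp.sum_congr
    intro i _
    rw [proj_apply_mem hj]
  have hone : (l.sum fun i μ => μ * (r i j)) ≠ 0 := by rw [heval]; exact one_ne_zero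
  rw [Finsupp.sum] at hone
  obtain ⟨i₀, hi₀s, hi₀⟩ := Finset.exists_ne_zero_of_sum_ne_zero hone
  have hli₀ : l i₀ ≠ 0 := left_ne_zero_of_mul hi₀
  have hri₀ : r i₀ j ≠ 0 := right_ne_zero_of_mul hi₀
  have hi₀R : i₀ ∈ R := hlR hi₀s
  refine ⟨i₀, hi₀R, hri₀, ?_⟩
  set C' : Set J := C \ {j} with hC'
  have hC'sub : C' ⊆ C := diff_subset
  -- the projected sum identity
  have hsum' : (l.sum fun i μ => μ • proj C' (r i)) = 0 := by
    have := congrArg (proj C' (F := F)) hsum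
    rw [map_finsuppSum] at this
    simp only [map_smul] at this
    rw [proj_single_not_mem (by simp [hC'])] at this
    calc (l.sum fun i μ => μ • proj C' (r i))
        = l.sum fun i μ => μ • proj C' (proj C (r i)) := by
          apply Finsupp.sum_congr; intro i _; rw [proj_proj hC'sub]
      _ = 0 := this
  -- express proj C' (r i₀) in terms of the other rows
  have hmemA : proj C' (r i₀) ∈ span F ((fun i => proj C' (r i)) '' (R \ {i₀})) := by
    rw [Finsupp.sum] at hsum'
    rw [← Finset.add_sum_erase _ _ hi₀s] at hsum'
    have : proj C' (r i₀)
        = (l i₀)⁻¹ • (-(∑ i ∈ l.support.erase i₀, l i • proj C' (r i))) := by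
      rw [eq_inv_smul_iff₀ hli₀]
      rw [eq_neg_iff_add_eq_zero.2 hsum']
    rw [this]
    apply Submodule.smul_mem
    apply Submodule.neg_mem
    apply Submodule.sum_mem
    intro i his
    apply Submodule.smul_mem
    apply Submodule.subset_span
    refine ⟨i, ⟨hlR (Finset.mem_of_mem_erase his), ?_⟩, rfl⟩
    simp only [Set.mem_singleton_iff]
    exact Finset.ne_of_mem_erase his
  -- conclude spanning
  intro j' hj'
  have h1 : Finsupp.single j' (1 : F) ∈ span F ((fun i => proj C' (r i)) '' R) := by
    have h0 := h j' (hC'sub hj')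
    have h2 : proj C' (Finsupp.single j' (1:F))
        ∈ Submodule.map (proj C' (F := F)) (span F ((fun i => proj C (r i)) '' R)) :=
      Submodule.mem_map_of_mem h0
    rw [Submodule.map_span] at h2
    rw [proj_single_mem hj'] at h2
    have himg : (proj C' (F := F)) '' ((fun i => proj C (r i)) '' R)
        = (fun i => proj C' (r i)) '' R := by
      rw [Set.image_image]
      apply Set.image_congr
      intro i _
      exact proj_proj hC'sub (r i)
    rwa [himg] at h2
  have hRsplit : R = insert i₀ (R \ {i₀}) := by
    rw [Set.insert_diff_singleton, Set.insert_eq_self.2 hi₀R]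
  rw [hRsplit, Set.image_insert_eq, Submodule.span_insert_eq_span hmemA] at h1
  exact h1

structure Cfg (r : I → (J →₀ F)) (R : Set I) (C : Set J) where
  Rs : Set I
  Cs : Set J
  m : J → I
  hR : Rs ⊆ R
  hC : Cs ⊆ C
  inv : SpansOn r Rs Cs
  good : ∀ j, j ∈ C → j ∉ Cs → m j ∈ R ∧ m j ∉ Rs ∧ r (m j) j ≠ 0
  inj : Set.InjOn m (C \ Cs)

variable {r : I → (J →₀ F)} {R : Set I} {C : Set J}

noncomputable def stepCfg (e : ℕ → J) (n : ℕ) (cfg : Cfg r R C) : Cfg r R C := by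
  classical
  by_cases h : e n ∈ cfg.Cs
  · have K := key cfg.inv h
    refine
      { Rs := cfg.Rs \ {K.choose}
        Cs := cfg.Cs \ {e n}
        m := Function.update cfg.m (e n) K.choose
        hR := Set.diff_subset.trans cfg.hR
        hC := Set.diff_subset.trans cfg.hC
        inv := K.choose_spec.2.2
        good := ?_
        inj := ?_ }
    · intro j hjC hj
      by_cases hje : j = e n
      · subst hje
        rw [Function.update_self]
        refine ⟨cfg.hR K.choose_spec.1, ?_, K.choose_spec.2.1⟩
        simp
      · have hjCs : j ∉ cfg.Cs := by
          intro hmem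
          exact hj ⟨hmem, hje⟩
        have old := cfg.good j hjC hjCs
        rw [Function.update_of_ne hje]
        exact ⟨old.1, fun hmem => old.2.1 hmem.1, old.2.2⟩
    · intro j hj j' hj' heq
      by_cases hje : j = e n <;> by_cases hje' : j' = e n
      · rw [hje, hje']
      · exfalso
        subst hje
        rw [Function.update_self, Function.update_of_ne hje'] at heq
        have hjCs' : j' ∉ cfg.Cs := fun hmem => hj'.2 ⟨hmem, hje'⟩
        have old := cfg.good j' hj'.1 hjCs'
        exact old.2.1 (heq ▸ K.choose_spec.1)
      · exfalso
        subst hje'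
        rw [Function.update_self, Function.update_of_ne hje] at heq
        have hjCs : j ∉ cfg.Cs := fun hmem => hj.2 ⟨hmem, hje⟩
        have old := cfg.good j hj.1 hjCs
        exact old.2.1 (heq ▸ K.choose_spec.1)
      · rw [Function.update_of_ne hje, Function.update_of_ne hje'] at heq
        have hjCs : j ∉ cfg.Cs := fun hmem => hj.2 ⟨hmem, hje⟩
        have hjCs' : j' ∉ cfg.Cs := fun hmem => hj'.2 ⟨hmem, hje'⟩
        exact cfg.inj ⟨hj.1, hjCs⟩ ⟨hj'.1, hjCs'⟩ heq
  · exact cfg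

lemma stepCfg_Cs_subset (e : ℕ → J) (n : ℕ) (cfg : Cfg r R C) :
    (stepCfg e n cfg).Cs ⊆ cfg.Cs := by
  classical
  unfold stepCfg
  split_ifs with h
  · exact Set.diff_subset
  · exact subset_rfl

lemma stepCfg_m_eq (e : ℕ → J) (n : ℕ) (cfg : Cfg r R C) {j : J} (hj : j ∉ cfg.Cs) :
    (stepCfg e n cfg).m j = cfg.m j := by
  classical
  unfold stepCfg
  split_ifs with h
  · have : j ≠ e n := fun hje => hj (hje ▸ h)
    simp only []
    rw [Function.update_of_ne this]
  · rfl

lemma stepCfg_not_mem (e : ℕ → J) (n : ℕ) (cfg : Cfg r R C) :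
    e n ∉ (stepCfg e n cfg).Cs := by
  classical
  unfold stepCfg
  split_ifs with h
  · simp
  · exact h

noncomputable def seqCfg (e : ℕ → J) (cfg0 : Cfg r R C) : ℕ → Cfg r R C
  | 0 => cfg0
  | n + 1 => stepCfg e n (seqCfg e cfg0 n)

lemma seqCfg_Cs_mono (e : ℕ → J) (cfg0 : Cfg r R C) {n k : ℕ} (h : n ≤ k) :
    (seqCfg e cfg0 k).Cs ⊆ (seqCfg e cfg0 n).Cs := by
  induction k, h using Nat.le_induction with
  | base => exact subset_rfl
  | succ k hk ih => exact (stepCfg_Cs_subset e k _).trans ih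

lemma seqCfg_m_stable (e : ℕ → J) (cfg0 : Cfg r R C) {n : ℕ} {j : J}
    (hj : j ∉ (seqCfg e cfg0 n).Cs) {k : ℕ} (h : n ≤ k) :
    (seqCfg e cfg0 k).m j = (seqCfg e cfg0 n).m j := by
  induction k, h using Nat.le_induction with
  | base => rfl
  | succ k hk ih =>
    have hj' : j ∉ (seqCfg e cfg0 k).Cs := fun hmem => hj (seqCfg_Cs_mono e cfg0 hk hmem)
    rw [show seqCfg e cfg0 (k+1) = stepCfg e k (seqCfg e cfg0 k) from rfl,
      stepCfg_m_eq e k _ hj', ih]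

lemma countable_case [Nonempty I] (hCc : C.Countable) (h : SpansOn r R C) :
    ∃ φ : J → I, Set.InjOn φ C ∧ ∀ j ∈ C, φ j ∈ R ∧ r (φ j) j ≠ 0 := by
  classical
  rcases C.eq_empty_or_nonempty with rfl | hne
  · exact ⟨fun _ => Classical.arbitrary I, by simp, by simp⟩
  obtain ⟨e, he⟩ := hCc.exists_eq_range hne
  have cfg0 : Cfg r R C :=
    { Rs := R, Cs := C, m := fun _ => Classical.arbitrary I
      hR := subset_rfl, hC := subset_rfl, inv := h
      good := fun j hj hnj => absurd hj hnj
      inj := by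
        intro j hj
        exact absurd hj.2 (not_not.2 hj.1) }
  set seq := seqCfg e cfg0 with hseq
  have hout : ∀ j ∈ C, ∃ n, j ∉ (seq n).Cs := by
    intro j hj
    have : j ∈ Set.range e := he ▸ hj
    obtain ⟨n, hn⟩ := this
    exact ⟨n + 1, hn ▸ stepCfg_not_mem e n (seq n)⟩
  set φ : J → I := fun j =>
    if hj : j ∈ C then (seq (Nat.find (hout j hj))).m j else Classical.arbitrary I with hφ
  have hφval : ∀ j (hj : j ∈ C), φ j = (seq (Nat.find (hout j hj))).m j := by
    intro j hj; rw [hφ]; simp only [dif_pos hj]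
  have hφstab : ∀ j (hj : j ∈ C) (k : ℕ), Nat.find (hout j hj) ≤ k →
      (seq k).m j = φ j := by
    intro j hj k hk
    rw [hφval j hj]
    exact seqCfg_m_stable e cfg0 (Nat.find_spec (hout j hj)) hk
  refine ⟨φ, ?_, ?_⟩
  · intro j hj j' hj' heq
    set k := max (Nat.find (hout j hj)) (Nat.find (hout j' hj')) with hk
    have h1 : (seq k).m j = φ j := hφstab j hj k (le_max_left _ _)
    have h2 : (seq k).m j' = φ j' := hφstab j' hj' k (le_max_right _ _)
    have hjk : j ∉ (seq k).Cs :=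
      fun hmem => Nat.find_spec (hout j hj) (seqCfg_Cs_mono e cfg0 (le_max_left _ _) hmem)
    have hjk' : j' ∉ (seq k).Cs :=
      fun hmem => Nat.find_spec (hout j' hj') (seqCfg_Cs_mono e cfg0 (le_max_right _ _) hmem)
    exact (seq k).inj ⟨hj, hjk⟩ ⟨hj', hjk'⟩ (by rw [h1, h2, heq])
  · intro j hj
    have hspec := Nat.find_spec (hout j hj)
    have hg := (seq (Nat.find (hout j hj))).good j hj hspec
    rw [hφval j hj]
    exact ⟨hg.1, hg.2.2⟩

section Zorn

variable (r : I → (J →₀ F)) (cert : J → (I →₀ F))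

/-- the finite set of columns "directly needed" by column `j` through its certificate -/
def gset (j : J) : Set J :=
  insert j (⋃ i ∈ ((cert j).support : Set I), ((r i).support : Set J))

lemma gset_finite (j : J) : (gset r cert j).Finite :=
  (Set.Finite.biUnion (cert j).support.finite_toSet
    (fun i _ => (r i).support.finite_toSet)).insert j

def IsClosedSet (S : Set J) : Prop := ∀ j ∈ S, gset r cert j ⊆ S

lemma IsClosedSet.union {S T : Set J} (hS : IsClosedSet r cert S) (hT : IsClosedSet r cert T) :
    IsClosedSet r cert (S ∪ T) := by
  rintro j (hj | hj)
  · exact (hS j hj).trans subset_union_left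
  · exact (hT j hj).trans subset_union_right

/-- iterated closure of a singleton -/
def clA (j₀ : J) : ℕ → Set J
  | 0 => {j₀}
  | n + 1 => ⋃ j ∈ clA j₀ n, gset r cert j

def clSet (j₀ : J) : Set J := ⋃ n, clA r cert j₀ n

lemma clA_countable (j₀ : J) (n : ℕ) : (clA r cert j₀ n).Countable := by
  induction n with
  | zero => exact Set.countable_singleton j₀
  | succ n ih => exact Set.Countable.biUnion ih (fun j _ => (gset_finite r cert j).countable)

lemma clSet_countable (j₀ : J) : (clSet r cert j₀).Countable :=
  Set.countable_iUnion (clA_countable r cert j₀)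

lemma mem_clSet_self (j₀ : J) : j₀ ∈ clSet r cert j₀ :=
  Set.mem_iUnion.2 ⟨0, rfl⟩

lemma clSet_closed (j₀ : J) : IsClosedSet r cert (clSet r cert j₀) := by
  intro j hj
  obtain ⟨n, hn⟩ := Set.mem_iUnion.1 hj
  intro j' hj'
  exact Set.mem_iUnion.2 ⟨n + 1, Set.mem_biUnion hn hj'⟩

/-- rows supported inside `S` -/
def rowsIn (S : Set J) : Set I := {i | ((r i).support : Set J) ⊆ S}

def goodSet : Set (Set (J × I)) :=
  {σ | (∀ p ∈ σ, r p.2 p.1 ≠ 0)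
    ∧ (∀ p ∈ σ, ((r p.2).support : Set J) ⊆ Prod.fst '' σ)
    ∧ IsClosedSet r cert (Prod.fst '' σ)
    ∧ (∀ p ∈ σ, ∀ q ∈ σ, p.1 = q.1 → p = q)
    ∧ (∀ p ∈ σ, ∀ q ∈ σ, p.2 = q.2 → p = q)}

set_option maxHeartbeats 1000000 in
lemma main_of_certificates [Nonempty I]
    (hcert : ∀ j, ((cert j).sum fun i μ => μ • r i) = Finsupp.single j (1 : F)) :
    ∃ φ : J → I, Function.Injective φ ∧ ∀ j, r (φ j) j ≠ 0 := by
  classical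
  -- Zorn's lemma
  have hempty : (∅ : Set (J × I)) ∈ goodSet r cert := by
    refine ⟨by simp, by simp, ?_, by simp, by simp⟩
    intro j hj
    simp at hj
  have hub : ∀ c ⊆ goodSet r cert, IsChain (· ⊆ ·) c → c.Nonempty →
      ∃ ub ∈ goodSet r cert, ∀ s ∈ c, s ⊆ ub := by
    intro c hc hchain hcne
    refine ⟨⋃₀ c, ⟨?_, ?_, ?_, ?_, ?_⟩, fun s hs => Set.subset_sUnion_of_mem hs⟩
    · rintro p ⟨σ, hσ, hp⟩
      exact (hc hσ).1 p hp
    · rintro p ⟨σ, hσ, hp⟩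
      exact ((hc hσ).2.1 p hp).trans
        (Set.image_mono (Set.subset_sUnion_of_mem hσ))
    · rintro j ⟨p, ⟨σ, hσ, hp⟩, rfl⟩
      exact ((hc hσ).2.2.1 p.1 (Set.mem_image_of_mem _ hp)).trans
        (Set.image_mono (Set.subset_sUnion_of_mem hσ))
    · rintro p ⟨σ₁, hσ₁, hp⟩ q ⟨σ₂, hσ₂, hq⟩ hpq
      rcases hchain.total hσ₁ hσ₂ with hle | hle
      · exact (hc hσ₂).2.2.2.1 p (hle hp) q hq hpq
      · exact (hc hσ₁).2.2.2.1 p hp q (hle hq) hpq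
    · rintro p ⟨σ₁, hσ₁, hp⟩ q ⟨σ₂, hσ₂, hq⟩ hpq
      rcases hchain.total hσ₁ hσ₂ with hle | hle
      · exact (hc hσ₂).2.2.2.2 p (hle hp) q hq hpq
      · exact (hc hσ₁).2.2.2.2 p hp q (hle hq) hpq
  obtain ⟨σ, -, hmax⟩ := zorn_subset_nonempty (goodSet r cert) hub ∅ hempty
  have hσ := hmax.prop
  set D : Set J := Prod.fst '' σ with hD
  -- the maximal partial matching is total
  have htotal : ∀ j : J, j ∈ D := by
    by_contra hnot
    push_neg at hnot
    obtain ⟨j₀, hj₀⟩ := hnot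
    set cl : Set J := clSet r cert j₀ with hcl
    set S' : Set J := D ∪ cl with hS'
    set Δ : Set J := cl \ D with hΔ
    have hS'closed : IsClosedSet r cert S' := IsClosedSet.union r cert hσ.2.2.1 (clSet_closed r cert j₀)
    have hΔc : Δ.Countable := (clSet_countable r cert j₀).mono diff_subset
    -- spanning hypothesis for the quotient system
    have hspans : SpansOn r (rowsIn r S' \ rowsIn r D) Δ := by
      intro j hjΔ
      have hjS' : j ∈ S' := Or.inr hjΔ.1
      have hgj : gset r cert j ⊆ S' := hS'closed j hjS'
      have hkey : ((cert j).sum fun i μ => μ • proj Δ (r i)) = Finsupp.single j (1 : F) := by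
        have h0 := congrArg (proj Δ (F := F)) (hcert j)
        rw [map_finsuppSum] at h0
        simp only [map_smul] at h0
        rwa [proj_single_mem hjΔ] at h0
      rw [← hkey, Finsupp.sum]
      apply Submodule.sum_mem
      intro i his
      have hsupp : ((r i).support : Set J) ⊆ S' := by
        intro j' hj'
        exact hgj (Set.mem_insert_of_mem _ (Set.mem_biUnion (Finset.mem_coe.2 his) hj'))
      by_cases hiD : i ∈ rowsIn r D
      · have hz : proj Δ (r i) = 0 := by
          apply proj_eq_zero
          intro j' hj'
          by_contra hne
          exact hj'.2 (hiD (Finsupp.mem_support_iff.2 hne))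
        rw [hz, smul_zero]
        exact Submodule.zero_mem _
      · exact Submodule.smul_mem _ _ (Submodule.subset_span ⟨i, ⟨hsupp, hiD⟩, rfl⟩)
    obtain ⟨ψ, hψinj, hψ⟩ := countable_case hΔc hspans
    -- extend σ
    set σ' : Set (J × I) := σ ∪ (fun j => (j, ψ j)) '' Δ with hσ'
    have hdom' : Prod.fst '' σ' = D ∪ Δ := by
      rw [hσ', Set.image_union, Set.image_image]
      simp
      rfl
    have hDΔ : D ∪ Δ = S' := by
      rw [hΔ, hS', Set.union_diff_self]
    have hσ'good : σ' ∈ goodSet r cert := by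
      refine ⟨?_, ?_, ?_, ?_, ?_⟩
      · rintro p (hp | ⟨j, hj, rfl⟩)
        · exact hσ.1 p hp
        · exact (hψ j hj).2
      · rintro p (hp | ⟨j, hj, rfl⟩)
        · exact (hσ.2.1 p hp).trans (by rw [hdom', hDΔ]; exact subset_union_left.trans (by rw [hS']))
        · rw [hdom', hDΔ]
          exact (hψ j hj).1.1
      · rw [hdom', hDΔ]
        exact hS'closed
      · rintro p (hp | ⟨j, hj, rfl⟩) q (hq | ⟨j', hj', rfl⟩) hpq
        · exact hσ.2.2.2.1 p hp q hq hpq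
        · exact absurd ((show p.1 = j' from hpq) ▸ Set.mem_image_of_mem Prod.fst hp) hj'.2
        · exact absurd ((show j = q.1 from hpq) ▸ Set.mem_image_of_mem Prod.fst hq) hj.2
        · rw [show j = j' from hpq]
      · rintro p (hp | ⟨j, hj, rfl⟩) q (hq | ⟨j', hj', rfl⟩) hpq
        · exact hσ.2.2.2.2 p hp q hq hpq
        · exfalso
          have hpD : p.2 ∈ rowsIn r D := hσ.2.1 p hp
          exact ((hψ j' hj').1.2) ((show p.2 = ψ j' from hpq) ▸ hpD)
        · exfalso
          have hqD : q.2 ∈ rowsIn r D := hσ.2.1 q hq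
          exact ((hψ j hj).1.2) ((show q.2 = ψ j from hpq.symm) ▸ hqD)
        · rw [hψinj hj hj' (show ψ j = ψ j' from hpq)]
    have hsub : σ ⊆ σ' := subset_union_left
    have : σ' ⊆ σ := hmax.2 hσ'good hsub
    have : (j₀, ψ j₀) ∈ σ := by
      apply this
      exact Or.inr ⟨j₀, ⟨mem_clSet_self r cert j₀, hj₀⟩, rfl⟩
    exact hj₀ (Set.mem_image_of_mem Prod.fst this)
  -- extract the matching
  have hpair : ∀ j : J, ∃ i, (j, i) ∈ σ := by
    intro j
    obtain ⟨p, hp, hp1⟩ := htotal j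
    exact ⟨p.2, by rwa [← hp1, Prod.mk.eta]⟩
  refine ⟨fun j => (hpair j).choose, ?_, fun j => hσ.1 _ ((hpair j).choose_spec)⟩
  intro j j' heq
  have h1 := (hpair j).choose_spec
  have h2 := (hpair j').choose_spec
  have := hσ.2.2.2.2 _ h1 _ h2 (by simpa using heq)
  simpa using congrArg Prod.fst this

end Zorn

end Stmt2Aux

theorem stmt_2 {F : Type*} [Field F] {I J : Type*} (a : I × J → F)
    (hrow : ∀ i : I, {j : J | a (i, j) ≠ 0}.Finite)
    (htriv : ∀ x : J → F, (∀ i : I, ∑ᶠ j : J, a (i, j) * x j = 0) → x = 0) :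
    ∃ φ : J → I, Function.Injective φ ∧ ∀ j : J, a (φ j, j) ≠ 0 := by
  classical
  by_cases hJ : IsEmpty J
  · exact ⟨fun j => (hJ.false j).elim, fun j => (hJ.false j).elim, fun j => (hJ.false j).elim⟩
  have hJne : Nonempty J := not_isEmpty_iff.1 hJ
  set r : I → (J →₀ F) := fun i => Finsupp.ofSupportFinite (fun j => a (i, j)) (hrow i) with hr
  have hra : ∀ i j, r i j = a (i, j) := by
    intro i j
    rw [hr]
    rfl
  -- duality: every coordinate vector is in the span of the rows
  have hspan : ∀ j : J, Finsupp.single j (1 : F) ∈ Submodule.span F (Set.range r) := by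
    by_contra hnot
    push_neg at hnot
    obtain ⟨j, hjn⟩ := hnot
    set W := Submodule.span F (Set.range r) with hW
    have hq : W.mkQ (Finsupp.single j (1 : F)) ≠ 0 := by
      rw [Submodule.mkQ_apply, ne_eq, Submodule.Quotient.mk_eq_zero]
      exact hjn
    have hdual : ∃ φ₀ : Module.Dual F ((J →₀ F) ⧸ W), φ₀ (W.mkQ (Finsupp.single j 1)) ≠ 0 := by
      by_contra hall
      push_neg at hall
      exact hq ((Module.forall_dual_apply_eq_zero_iff F _).1 hall)
    obtain ⟨φ₀, hφ₀⟩ := hdual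
    set x : J → F := fun j' => φ₀ (W.mkQ (Finsupp.single j' 1)) with hx
    have hzero : ∀ i, ∑ᶠ j' : J, a (i, j') * x j' = 0 := by
      intro i
      have hsub : Function.support (fun j' => a (i, j') * x j') ⊆ ((r i).support : Set J) := by
        intro j' hj'
        simp only [Function.mem_support] at hj'
        have ha' : a (i, j') ≠ 0 := left_ne_zero_of_mul hj'
        apply Finset.mem_coe.2 (Finsupp.mem_support_iff.2 _)
        rw [hra]
        exact ha'
      rw [finsum_eq_sum_of_support_subset _ hsub]
      have hterm : ∀ j' ∈ (r i).support, a (i, j') * x j'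
          = φ₀ (W.mkQ (a (i, j') • Finsupp.single j' 1)) := by
        intro j' _
        rw [map_smul, map_smul, smul_eq_mul]
      rw [Finset.sum_congr rfl hterm, ← map_sum, ← map_sum]
      have hsum : (∑ j' ∈ (r i).support, a (i, j') • Finsupp.single j' (1 : F)) = r i := by
        have : ∀ j' ∈ (r i).support, a (i, j') • Finsupp.single j' (1 : F)
            = Finsupp.single j' (r i j') := by
          intro j' _
          rw [Finsupp.smul_single, smul_eq_mul, mul_one, hra]
        rw [Finset.sum_congr rfl this]
        exact Finsupp.sum_single (r i)
      rw [hsum]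
      have hmem : W.mkQ (r i) = 0 := by
        rw [Submodule.mkQ_apply, Submodule.Quotient.mk_eq_zero]
        exact Submodule.subset_span (Set.mem_range_self i)
      rw [hmem, map_zero]
    have hx0 := htriv x hzero
    have : x j = 0 := by rw [hx0]; rfl
    exact hφ₀ this
  have hNI : Nonempty I := by
    by_contra hne
    have hIempty : IsEmpty I := not_nonempty_iff.1 hne
    obtain ⟨j⟩ := hJne
    have := hspan j
    rw [Set.range_eq_empty r, Submodule.span_empty, Submodule.mem_bot] at this
    exact one_ne_zero (Finsupp.single_eq_zero.1 this)
  have cert : ∀ j : J, ∃ c : I →₀ F, (c.sum fun i μ => μ • r i) = Finsupp.single j (1 : F) :=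
    fun j => Finsupp.mem_span_range_iff_exists_finsupp.1 (hspan j)
  choose c hc using cert
  obtain ⟨φ, hinj, hne⟩ := Stmt2Aux.main_of_certificates r c hc
  refine ⟨φ, hinj, fun j => ?_⟩
  rw [← hra]
  exact hne j
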